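/- Suppose ∫₀^∞ (1/a(x))·exp(−2B(x)) dx = ∞ and let Ω⁺(b,a) = sup_{x>0} ( ∫₀ˣ (1/a(y))·exp(−2B(y)) dy )·( ∫ₓ^∞ exp(2B(y)) dy ) ∈ [0,∞]. If λ > 1/(2·Ω⁺(b,a)) (with the convention 1/∞ = 0), then there is no finite measurable function f : (0,∞) → [0,∞) satisfying the integral equation f(x) = 1 + 2λ ∫₀ˣ (1/a(y))·exp(−2B(y)) ( ∫_y^∞ f(z)·exp(2B(z)) dz ) dy for all x > 0. -/
import Mathlib


open MeasureTheory Set Filter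
open scoped ENNReal

/-- `B(x) = ∫₀ˣ (b/a)(y) dy`. -/
noncomputable def Bfun (a b : ℝ → ℝ) (x : ℝ) : ℝ := ∫ y in (0:ℝ)..x, b y / a y

/-- `Ω⁺(b,a) = sup_{x>0} (∫₀ˣ (1/a) e^{-2B}) (∫ₓ^∞ e^{2B}) ∈ [0,∞]`. -/
noncomputable def OmegaPlus (a b : ℝ → ℝ) : ℝ≥0∞ :=
  ⨆ x ∈ Ioi (0:ℝ),
    ENNReal.ofReal (∫ y in (0:ℝ)..x, (a y)⁻¹ * Real.exp (-2 * Bfun a b y)) *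
      ∫⁻ y in Ioi x, ENNReal.ofReal (Real.exp (2 * Bfun a b y))

theorem stmt19 (a b : ℝ → ℝ)
    (ha : ContDiffOn ℝ 1 a (Ici 0)) (hapos : ∀ x ∈ Ici (0:ℝ), 0 < a x)
    (hb : ContinuousOn b (Ici 0))
    (hinf : ∫⁻ x in Ioi (0:ℝ),
        ENNReal.ofReal ((a x)⁻¹ * Real.exp (-2 * Bfun a b x)) = ⊤)
    (lam : ℝ) (hlam : 1 / (2 * OmegaPlus a b) < ENNReal.ofReal lam) :
    ¬∃ f : ℝ → ℝ≥0∞, Measurable f ∧ (∀ x ∈ Ioi (0:ℝ), f x ≠ ⊤) ∧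
      ∀ x ∈ Ioi (0:ℝ),
        f x = 1 + 2 * ENNReal.ofReal lam *
          ∫⁻ y in Ioo (0:ℝ) x,
            ENNReal.ofReal ((a y)⁻¹ * Real.exp (-2 * Bfun a b y)) *
              ∫⁻ z in Ioi y, f z * ENNReal.ofReal (Real.exp (2 * Bfun a b z)) := by
  rintro ⟨f, hfm, hfne, hfeq⟩
  set g : ℝ → ℝ := fun y => (a y)⁻¹ * Real.exp (-2 * Bfun a b y) with hg
  set E2 : ℝ → ℝ≥0∞ := fun z => ENNReal.ofReal (Real.exp (2 * Bfun a b z)) with hE2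
  -- From hlam, 1 < λ * (2 Ω)
  have h1 : (1 : ℝ≥0∞) < ENNReal.ofReal lam * (2 * OmegaPlus a b) := by
    rwa [ENNReal.div_lt_iff (Or.inr one_ne_zero) (Or.inr ENNReal.one_ne_top)] at hlam
  -- extract a point x₀ where the term exceeds 1 after multiplying by 2λ
  obtain ⟨x₀, hx₀, hc⟩ : ∃ x₀, x₀ ∈ Ioi (0:ℝ) ∧ 1 < 2 * ENNReal.ofReal lam *
      (ENNReal.ofReal (∫ y in (0:ℝ)..x₀, g y) * ∫⁻ z in Ioi x₀, E2 z) := by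
    by_contra hcon
    push_neg at hcon
    have : ENNReal.ofReal lam * (2 * OmegaPlus a b) ≤ 1 := by
      rw [OmegaPlus]
      simp only [ENNReal.mul_iSup]
      refine iSup_le fun x => iSup_le fun hx => ?_
      have := hcon x hx
      calc ENNReal.ofReal lam * (2 *
            (ENNReal.ofReal (∫ y in (0:ℝ)..x, (a y)⁻¹ * Real.exp (-2 * Bfun a b y)) *
              ∫⁻ y in Ioi x, ENNReal.ofReal (Real.exp (2 * Bfun a b y))))
          = 2 * ENNReal.ofReal lam *
            (ENNReal.ofReal (∫ y in (0:ℝ)..x, g y) * ∫⁻ z in Ioi x, E2 z) := by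
              ring
        _ ≤ 1 := this
    exact absurd h1 this.not_gt
  simp only [mem_Ioi] at hx₀
  set G0 : ℝ := ∫ y in (0:ℝ)..x₀, g y with hG0
  set E0 : ℝ≥0∞ := ∫⁻ z in Ioi x₀, E2 z with hE0
  set c : ℝ≥0∞ := 2 * ENNReal.ofReal lam * (ENNReal.ofReal G0 * E0) with hcdef
  -- analytic facts about g on [0, x₀]
  have hacont : ContinuousOn a (Ici 0) := ha.continuousOn
  have hIcc : Icc (0:ℝ) x₀ ⊆ Ici 0 := Icc_subset_Ici_self
  have hbacont : ContinuousOn (fun y => b y / a y) (Icc 0 x₀) :=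
    (hb.div hacont fun x hx => (hapos x hx).ne').mono hIcc
  have hBcont : ContinuousOn (Bfun a b) (Icc 0 x₀) := by
    have := intervalIntegral.continuousOn_primitive_interval
      (f := fun y => b y / a y) (μ := volume) (a := 0) (b := x₀)
      (by rw [uIcc_of_le hx₀.le]; exact hbacont.integrableOn_Icc)
    rwa [uIcc_of_le hx₀.le] at this
  have hgcont : ContinuousOn g (Icc 0 x₀) := by
    refine ContinuousOn.mul ?_ ?_
    · exact ((hacont.mono hIcc).inv₀ fun x hx => (hapos x (hIcc hx)).ne')
    · exact Real.continuous_exp.comp_continuousOn (continuousOn_const.mul hBcont)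
  have hgint : IntegrableOn g (Ioo 0 x₀) := hgcont.integrableOn_Icc.mono_set Ioo_subset_Icc_self
  have hofG : (∫⁻ y in Ioo (0:ℝ) x₀, ENNReal.ofReal (g y)) = ENNReal.ofReal G0 := by
    rw [hG0, intervalIntegral.integral_of_le hx₀.le, integral_Ioc_eq_integral_Ioo,
      ofReal_integral_eq_lintegral_ofReal hgint]
    rw [EventuallyLE, ae_restrict_iff' measurableSet_Ioo]
    filter_upwards with y hy
    exact mul_nonneg (inv_nonneg.mpr (hapos y (le_of_lt hy.1)).le) (Real.exp_pos _).le
  have hc' : 1 < c := hc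
  -- key induction: f z ≥ c^n for all z > x₀
  have key : ∀ n : ℕ, ∀ z ∈ Ioi x₀, c ^ n ≤ f z := by
    intro n
    induction n with
    | zero =>
      intro z hz
      rw [pow_zero, hfeq z (mem_Ioi.mpr (hx₀.trans hz))]
      exact le_self_add
    | succ n ih =>
      intro z hz
      have hz0 : (0:ℝ) < z := hx₀.trans hz
      have hH : ∀ y ∈ Ioo (0:ℝ) x₀,
          c ^ n * E0 ≤ ∫⁻ w in Ioi y, f w * E2 w := by
        intro y hy
        calc c ^ n * E0 ≤ ∫⁻ w in Ioi x₀, c ^ n * E2 w := lintegral_const_mul_le _ _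
          _ ≤ ∫⁻ w in Ioi x₀, f w * E2 w := by
              refine lintegral_mono_ae ?_
              rw [ae_restrict_iff' measurableSet_Ioi]
              filter_upwards with w hw
              exact mul_le_mul_left (ih w hw) _
          _ ≤ ∫⁻ w in Ioi y, f w * E2 w :=
              lintegral_mono_set (Ioi_subset_Ioi hy.2.le)
      have hI : ENNReal.ofReal G0 * (c ^ n * E0) ≤
          ∫⁻ y in Ioo (0:ℝ) z, ENNReal.ofReal (g y) * ∫⁻ w in Ioi y, f w * E2 w := by
        calc ENNReal.ofReal G0 * (c ^ n * E0)
            = (c ^ n * E0) * ∫⁻ y in Ioo (0:ℝ) x₀, ENNReal.ofReal (g y) := by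
              rw [hofG, mul_comm]
          _ ≤ ∫⁻ y in Ioo (0:ℝ) x₀, (c ^ n * E0) * ENNReal.ofReal (g y) :=
              lintegral_const_mul_le _ _
          _ ≤ ∫⁻ y in Ioo (0:ℝ) x₀, ENNReal.ofReal (g y) * ∫⁻ w in Ioi y, f w * E2 w := by
              refine lintegral_mono_ae ?_
              rw [ae_restrict_iff' measurableSet_Ioo]
              filter_upwards with y hy
              rw [mul_comm]
              exact mul_le_mul_right (hH y hy) _
          _ ≤ _ := lintegral_mono_set (Ioo_subset_Ioo_right hz.le)
      calc c ^ (n + 1)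
          = 2 * ENNReal.ofReal lam * (ENNReal.ofReal G0 * (c ^ n * E0)) := by
            rw [hcdef]; ring
        _ ≤ 2 * ENNReal.ofReal lam *
            ∫⁻ y in Ioo (0:ℝ) z, ENNReal.ofReal (g y) * ∫⁻ w in Ioi y, f w * E2 w :=
            mul_le_mul_right hI _
        _ ≤ 1 + 2 * ENNReal.ofReal lam *
            ∫⁻ y in Ioo (0:ℝ) z, ENNReal.ofReal (g y) * ∫⁻ w in Ioi y, f w * E2 w :=
            le_add_self
        _ = f z := (hfeq z (mem_Ioi.mpr hz0)).symm
  -- conclude: f (x₀ + 1) would be infinite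
  have hmem : x₀ + 1 ∈ Ioi x₀ := mem_Ioi.mpr (lt_add_one x₀)
  have hfin : f (x₀ + 1) ≠ ⊤ := hfne _ (mem_Ioi.mpr (by linarith))
  have hbd : ∀ n, c ^ n ≤ f (x₀ + 1) := fun n => key n _ hmem
  rcases eq_or_ne c ⊤ with hctop | hctop
  · exact hfin (top_le_iff.mp (by simpa [hctop] using hbd 1))
  · have hcr : 1 < c.toReal := by
      have h := (ENNReal.toReal_lt_toReal (by simp) hctop).mpr hc'
      simpa using h
    obtain ⟨n, hn⟩ := pow_unbounded_of_one_lt (f (x₀ + 1)).toReal hcr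
    have h2 : (c ^ n).toReal ≤ (f (x₀ + 1)).toReal := ENNReal.toReal_mono hfin (hbd n)
    rw [ENNReal.toReal_pow] at h2
    linarith
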